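/- P is a pseudo-triangular basis of fuzzy sets if and only if P is a 2-overlapping Ruspini partition and each f_i ∈ P is strongly normal, min-convex, and strictly min-convex on its support. -/

import Mathlib

open Set Finset

private lemma two_le_pos' {n : ℕ} (hn : 2 ≤ n) : 0 < n := by omega
private lemma two_le_pred_lt' {n : ℕ} (hn : 2 ≤ n) : n - 1 < n := by omega

private lemma seg_exists {a b c : ℝ} (hab : a ≤ b) (hbc : b ≤ c) :
    ∃ l ∈ Set.Icc (0:ℝ) 1, b = l * a + (1 - l) * c := by
  rcases eq_or_lt_of_le (hab.trans hbc) with h | h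
  · exact ⟨1, by norm_num, by nlinarith [le_antisymm hab (hbc.trans h.ge)]⟩
  · refine ⟨(c - b)/(c - a), ⟨div_nonneg (by linarith) (by linarith), ?_⟩, ?_⟩
    · rw [div_le_one (by linarith)]; linarith
    · have hca : c - a ≠ 0 := by linarith
      field_simp
      ring
private lemma seg_exists_strict {a b c : ℝ} (hab : a < b) (hbc : b < c) :
    ∃ l : ℝ, 0 < l ∧ l < 1 ∧ b = l * a + (1 - l) * c := by
  refine ⟨(c - b)/(c - a), div_pos (by linarith) (by linarith), ?_, ?_⟩
  · rw [div_lt_one (by linarith)]; linarith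
  · have hca : c - a ≠ 0 := by linarith
    field_simp
    ring

private lemma forward_cover {n : ℕ} (hn : 2 ≤ n) (t : Fin n → ℝ) (tmono : StrictMono t)
    (t0 : t ⟨0, two_le_pos' hn⟩ = 0) (t1 : t ⟨n - 1, two_le_pred_lt' hn⟩ = 1) {x : ℝ}
    (hx : x ∈ Set.Icc (0:ℝ) 1) :
    ∃ k : Fin n, ∃ hk : (k : ℕ) + 1 < n, t k ≤ x ∧ x ≤ t ⟨(k : ℕ) + 1, hk⟩ := by
  classical
  set S : Finset (Fin n) := Finset.univ.filter (fun k => t k ≤ x) with hS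
  have hne : S.Nonempty := ⟨⟨0, two_le_pos' hn⟩, by simp [hS, t0, hx.1]⟩
  set k := S.max' hne with hk
  have hkx : t k ≤ x := (Finset.mem_filter.mp (S.max'_mem hne)).2
  by_cases hlast : (k : ℕ) = n - 1
  · have hk1 : t k = 1 := by rw [← t1]; congr 1; exact Fin.ext hlast
    have hx1 : x = 1 := le_antisymm hx.2 (hk1 ▸ hkx)
    have h2 : n - 2 + 1 < n := by omega
    refine ⟨⟨n - 2, by omega⟩, h2, ?_, ?_⟩
    · have h3 : t ⟨n - 2, by omega⟩ ≤ t ⟨n - 1, by omega⟩ :=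
        tmono.monotone (Fin.mk_le_mk.mpr (by omega))
      linarith
    · have : (⟨n - 2 + 1, h2⟩ : Fin n) = ⟨n - 1, two_le_pred_lt' hn⟩ := Fin.mk_eq_mk.mpr (by omega)
      rw [this, t1]; exact hx1.le
  · have hklt : (k : ℕ) + 1 < n := by have := k.isLt; omega
    refine ⟨k, hklt, hkx, ?_⟩
    by_contra hcon
    push_neg at hcon
    have hmem : (⟨(k : ℕ) + 1, hklt⟩ : Fin n) ∈ S := by
      rw [hS]; simp; linarith
    have := S.le_max' _ hmem
    rw [← hk, Fin.le_def] at this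
    simp at this

private lemma backward (n : ℕ) (hn : 2 ≤ n) (f : Fin n → ℝ → ℝ)
    (hcont : ∀ i, ContinuousOn (f i) (Set.Icc 0 1))
    (hmap : ∀ i, Set.MapsTo (f i) (Set.Icc 0 1) (Set.Icc 0 1))
    (hsum : ∀ x ∈ Set.Icc (0:ℝ) 1, ∑ i : Fin n, f i x = 1)
    (hnorm : ∀ i : Fin n, ∃! x, x ∈ Set.Icc (0:ℝ) 1 ∧ f i x = 1)
    (hconv : ∀ i : Fin n, ∀ x ∈ Set.Icc (0:ℝ) 1, ∀ y ∈ Set.Icc (0:ℝ) 1,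
       ∀ l ∈ Set.Icc (0:ℝ) 1, min (f i x) (f i y) ≤ f i (l * x + (1 - l) * y))
    (hsconv : ∀ i : Fin n, ∀ x y : ℝ, x < y →
       Set.Icc x y ⊆ {z | z ∈ Set.Icc (0:ℝ) 1 ∧ 0 < f i z} →
       ∀ l : ℝ, 0 < l → l < 1 →
         min (f i x) (f i y) < f i (l * x + (1 - l) * y)) :
    ∃ σ : Equiv.Perm (Fin n), ∃ t : Fin n → ℝ,
      StrictMono t ∧ t ⟨0, two_le_pos' hn⟩ = 0 ∧ t ⟨n - 1, two_le_pred_lt' hn⟩ = 1 ∧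
      ∀ i : Fin n, ∀ hi : (i : ℕ) + 1 < n,
        (f (σ i) (t i) = 1 ∧ f (σ i) (t ⟨(i : ℕ) + 1, hi⟩) = 0) ∧
        (∀ j : Fin n, j ≠ i → j ≠ ⟨(i : ℕ) + 1, hi⟩ →
          ∀ x ∈ Set.Icc (t i) (t ⟨(i : ℕ) + 1, hi⟩), f (σ j) x = 0) ∧
        (∀ x ∈ Set.Icc (t i) (t ⟨(i : ℕ) + 1, hi⟩),
          f (σ ⟨(i : ℕ) + 1, hi⟩) x = 1 - f (σ i) x) ∧
        (Set.BijOn (f (σ i)) (Set.Icc (t i) (t ⟨(i : ℕ) + 1, hi⟩)) (Set.Icc 0 1) ∧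
         Set.BijOn (f (σ ⟨(i : ℕ) + 1, hi⟩))
           (Set.Icc (t i) (t ⟨(i : ℕ) + 1, hi⟩)) (Set.Icc 0 1)) := by
  classical
  have nn : ∀ j, ∀ x ∈ Set.Icc (0:ℝ) 1, 0 ≤ f j x := fun j x hx => (hmap j hx).1
  have ub : ∀ j, ∀ x ∈ Set.Icc (0:ℝ) 1, f j x ≤ 1 := fun j x hx => (hmap j hx).2
  have pair : ∀ (i j : Fin n), i ≠ j → ∀ x ∈ Set.Icc (0:ℝ) 1, f i x + f j x ≤ 1 := by
    intro i j hij x hx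
    have h1 : ∑ k ∈ ({i, j} : Finset (Fin n)), f k x ≤ ∑ k, f k x :=
      Finset.sum_le_sum_of_subset_of_nonneg (Finset.subset_univ _)
        (fun k _ _ => nn k x hx)
    rw [Finset.sum_pair hij, hsum x hx] at h1
    exact h1
  choose p hp using fun i => (hnorm i).exists
  have pmem : ∀ i, p i ∈ Set.Icc (0:ℝ) 1 := fun i => (hp i).1
  have pval : ∀ i, f i (p i) = 1 := fun i => (hp i).2
  have puniq : ∀ i x, x ∈ Set.Icc (0:ℝ) 1 → f i x = 1 → x = p i :=
    fun i x hx hfx => (hnorm i).unique ⟨hx, hfx⟩ (hp i)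
  have zp : ∀ i j, i ≠ j → f j (p i) = 0 := by
    intro i j hij
    have h1 := pair i j hij (p i) (pmem i)
    rw [pval i] at h1
    have h2 := nn j (p i) (pmem i)
    linarith
  have pinj : Function.Injective p := by
    intro i j hij
    by_contra hne
    have h0 := zp i j hne
    rw [hij, pval j] at h0
    norm_num at h0
  have convB : ∀ (i : Fin n) {a b c : ℝ}, a ∈ Set.Icc (0:ℝ) 1 → c ∈ Set.Icc (0:ℝ) 1 →
      a ≤ b → b ≤ c → min (f i a) (f i c) ≤ f i b := by
    intro i a b c ha hc hab hbc
    obtain ⟨l, hl, hb⟩ := seg_exists hab hbc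
    rw [hb]
    exact hconv i a ha c hc l hl
  have sconvB : ∀ (i : Fin n) {a b c : ℝ},
      Set.Icc a c ⊆ {z | z ∈ Set.Icc (0:ℝ) 1 ∧ 0 < f i z} →
      a < b → b < c → min (f i a) (f i c) < f i b := by
    intro i a b c hsub hab hbc
    obtain ⟨l, hl0, hl1, hb⟩ := seg_exists_strict hab hbc
    rw [hb]
    exact hsconv i a c (hab.trans hbc) hsub l hl0 hl1
  -- a peak at 0
  have peak0 : ∃ j, p j = 0 := by
    have h01 : (0:ℝ) ∈ Set.Icc (0:ℝ) 1 := by norm_num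
    have hsum0 := hsum 0 h01
    have h1 : ∃ j, f j 0 ≠ 0 := by
      by_contra h
      push_neg at h
      rw [Finset.sum_eq_zero (fun i _ => h i)] at hsum0
      norm_num at hsum0
    obtain ⟨j, hj⟩ := h1
    have hj0 : 0 < f j 0 := lt_of_le_of_ne (nn j 0 h01) (Ne.symm hj)
    rcases eq_or_lt_of_le (ub j 0 h01) with h1 | h1
    · exact ⟨j, (puniq j 0 h01 h1).symm⟩
    exfalso
    have hsplit : f j 0 + ∑ k ∈ Finset.univ.erase j, f k 0 = 1 := by
      rw [Finset.add_sum_erase _ (fun k => f k 0) (Finset.mem_univ j)]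
      exact hsum0
    have hne : ∑ k ∈ Finset.univ.erase j, f k 0 ≠ 0 := by linarith
    obtain ⟨k, hk, hk0⟩ := Finset.exists_ne_zero_of_sum_ne_zero hne
    have hkj : k ≠ j := Finset.ne_of_mem_erase hk
    have hk0' : 0 < f k 0 := lt_of_le_of_ne (nn k 0 h01) (Ne.symm hk0)
    have hpj : 0 < p j := by
      rcases eq_or_lt_of_le (pmem j).1 with h | h
      · have hv := pval j
        rw [← h] at hv
        linarith
      · exact h
    have hpk : 0 < p k := by
      rcases eq_or_lt_of_le (pmem k).1 with h | h
      · have hv := pval k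
        rw [← h] at hv
        have := pair k j hkj 0 h01
        linarith
      · exact h
    rcases lt_trichotomy (p j) (p k) with h | h | h
    · have hz : f k (p j) = 0 := zp j k (Ne.symm hkj)
      have hc := convB k h01 (pmem k) hpj.le h.le
      rw [pval k, hz] at hc
      have := lt_min hk0' one_pos
      linarith
    · exact hkj (pinj h.symm)
    · have hz : f j (p k) = 0 := zp k j hkj
      have hc := convB j h01 (pmem j) hpk.le h.le
      rw [pval j, hz] at hc
      have := lt_min hj0 one_pos
      linarith
  -- a peak at 1
  have peak1 : ∃ j, p j = 1 := by
    have h11 : (1:ℝ) ∈ Set.Icc (0:ℝ) 1 := by norm_num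
    have hsum1 := hsum 1 h11
    have h1 : ∃ j, f j 1 ≠ 0 := by
      by_contra h
      push_neg at h
      rw [Finset.sum_eq_zero (fun i _ => h i)] at hsum1
      norm_num at hsum1
    obtain ⟨j, hj⟩ := h1
    have hj0 : 0 < f j 1 := lt_of_le_of_ne (nn j 1 h11) (Ne.symm hj)
    rcases eq_or_lt_of_le (ub j 1 h11) with h1 | h1
    · exact ⟨j, (puniq j 1 h11 h1).symm⟩
    exfalso
    have hsplit : f j 1 + ∑ k ∈ Finset.univ.erase j, f k 1 = 1 := by
      rw [Finset.add_sum_erase _ (fun k => f k 1) (Finset.mem_univ j)]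
      exact hsum1
    have hne : ∑ k ∈ Finset.univ.erase j, f k 1 ≠ 0 := by linarith
    obtain ⟨k, hk, hk0⟩ := Finset.exists_ne_zero_of_sum_ne_zero hne
    have hkj : k ≠ j := Finset.ne_of_mem_erase hk
    have hk0' : 0 < f k 1 := lt_of_le_of_ne (nn k 1 h11) (Ne.symm hk0)
    have hpj : p j < 1 := by
      rcases eq_or_lt_of_le (pmem j).2 with h | h
      · have hv := pval j
        rw [h] at hv
        linarith
      · exact h
    have hpk : p k < 1 := by
      rcases eq_or_lt_of_le (pmem k).2 with h | h
      · have hv := pval k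
        rw [h] at hv
        have := pair k j hkj 1 h11
        linarith
      · exact h
    rcases lt_trichotomy (p j) (p k) with h | h | h
    · have hz : f j (p k) = 0 := zp k j hkj
      have hc := convB j (pmem j) h11 h.le hpk.le
      rw [pval j, hz] at hc
      have := lt_min one_pos hj0
      linarith
    · exact hkj (pinj h.symm)
    · have hz : f k (p j) = 0 := zp j k (Ne.symm hkj)
      have hc := convB k (pmem k) h11 h.le hpj.le
      rw [pval k, hz] at hc
      have := lt_min one_pos hk0'
      linarith
  obtain ⟨j0, hj0⟩ := peak0
  obtain ⟨j1, hj1⟩ := peak1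
  set σ := Tuple.sort p with hσdef
  set t : Fin n → ℝ := p ∘ σ with htdef
  have tmono : StrictMono t :=
    (Tuple.monotone_sort p).strictMono_of_injective (pinj.comp σ.injective)
  have tval : ∀ i, f (σ i) (t i) = 1 := fun i => pval (σ i)
  have tmem : ∀ i, t i ∈ Set.Icc (0:ℝ) 1 := fun i => pmem (σ i)
  have t0 : t ⟨0, two_le_pos' hn⟩ = 0 := by
    refine le_antisymm ?_ (tmem _).1
    have h2 : t (σ.symm j0) = 0 := by
      show p (σ (σ.symm j0)) = 0
      rw [Equiv.apply_symm_apply]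
      exact hj0
    rw [← h2]
    exact tmono.monotone (by simp [Fin.le_def])
  have t1 : t ⟨n - 1, two_le_pred_lt' hn⟩ = 1 := by
    refine le_antisymm (tmem _).2 ?_
    have h2 : t (σ.symm j1) = 1 := by
      show p (σ (σ.symm j1)) = 1
      rw [Equiv.apply_symm_apply]
      exact hj1
    rw [← h2]
    refine tmono.monotone ?_
    rw [Fin.le_def]
    have := (σ.symm j1).isLt
    simp
    omega
  refine ⟨σ, t, tmono, t0, t1, ?_⟩
  intro i hi
  set i' : Fin n := ⟨(i:ℕ)+1, hi⟩ with hi'def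
  have hvi' : (i' : ℕ) = (i : ℕ) + 1 := rfl
  have hii' : i ≠ i' := Fin.ne_of_val_ne (by omega)
  have hlt : i < i' := Fin.lt_def.mpr (by omega)
  have hab : t i < t i' := tmono hlt
  have hsub : Set.Icc (t i) (t i') ⊆ Set.Icc (0:ℝ) 1 :=
    Set.Icc_subset_Icc (tmem i).1 (tmem i').2
  have hσii' : σ i ≠ σ i' := fun h => hii' (σ.injective h)
  have ga1 : f (σ i) (t i) = 1 := tval i
  have hb1 : f (σ i') (t i') = 1 := tval i'
  have gb0 : f (σ i) (t i') = 0 := by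
    rw [show t i' = p (σ i') from rfl]
    exact zp (σ i') (σ i) (Ne.symm hσii')
  have ha0 : f (σ i') (t i) = 0 := by
    rw [show t i = p (σ i) from rfl]
    exact zp (σ i) (σ i') hσii'
  have others : ∀ j : Fin n, j ≠ i → j ≠ i' → ∀ x ∈ Set.Icc (t i) (t i'), f (σ j) x = 0 := by
    intro j hj1 hj2 x hx
    by_contra hne
    have hxm := hsub hx
    have hpos : 0 < f (σ j) x := lt_of_le_of_ne (nn _ x hxm) (Ne.symm hne)
    have hσj_i : σ j ≠ σ i := fun h => hj1 (σ.injective h)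
    have hσj_i' : σ j ≠ σ i' := fun h => hj2 (σ.injective h)
    have hcase : j < i ∨ i' < j := by
      rw [Fin.lt_def, Fin.lt_def]
      have h1 : (j:ℕ) ≠ (i:ℕ) := fun h => hj1 (Fin.ext h)
      have h2 : (j:ℕ) ≠ (i':ℕ) := fun h => hj2 (Fin.ext h)
      omega
    rcases hcase with h | h
    · have htj : t j < t i := tmono h
      have h0 : f (σ j) (t i) = 0 := by
        rw [show t i = p (σ i) from rfl]
        exact zp (σ i) (σ j) (Ne.symm hσj_i)
      have hc : min (f (σ j) (t j)) (f (σ j) x) ≤ f (σ j) (t i) :=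
        convB (σ j) (tmem j) hxm htj.le hx.1
      rw [tval j, h0] at hc
      have := lt_min one_pos hpos
      linarith
    · have htj : t i' < t j := tmono h
      have h0 : f (σ j) (t i') = 0 := by
        rw [show t i' = p (σ i') from rfl]
        exact zp (σ i') (σ j) (Ne.symm hσj_i')
      have hc : min (f (σ j) x) (f (σ j) (t j)) ≤ f (σ j) (t i') :=
        convB (σ j) hxm (tmem j) hx.2 htj.le
      rw [tval j, h0] at hc
      have := lt_min hpos one_pos
      linarith
  have sum2 : ∀ x ∈ Set.Icc (t i) (t i'), f (σ i) x + f (σ i') x = 1 := by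
    intro x hx
    have h := hsum x (hsub hx)
    have hre : ∑ k, f (σ k) x = ∑ k, f k x := Equiv.sum_comp σ (fun k => f k x)
    rw [← hre, Finset.sum_eq_add_of_mem i i' (Finset.mem_univ _) (Finset.mem_univ _) hii'
      (fun c _ hc => others c hc.1 hc.2 x hx)] at h
    exact h
  have gpos : ∀ x ∈ Set.Icc (t i) (t i'), x ≠ t i' → 0 < f (σ i) x := by
    intro x hx hxb
    rcases eq_or_lt_of_le (nn (σ i) x (hsub hx)) with h | h
    · exfalso
      have h2 := sum2 x hx
      have h3 : f (σ i') x = 1 := by linarith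
      exact hxb (puniq (σ i') x (hsub hx) h3)
    · exact h
  have glt1 : ∀ x ∈ Set.Icc (t i) (t i'), x ≠ t i → f (σ i) x < 1 := by
    intro x hx hxa
    rcases eq_or_lt_of_le (ub (σ i) x (hsub hx)) with h | h
    · exact absurd (puniq (σ i) x (hsub hx) h) hxa
    · exact h
  have ganti : StrictAntiOn (f (σ i)) (Set.Icc (t i) (t i')) := by
    intro u hu v hv huv
    rcases eq_or_lt_of_le hv.2 with hvb | hvb
    · rw [hvb, gb0]
      exact gpos u hu (by intro h; rw [h] at huv; exact absurd huv (not_lt.mpr hv.2))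
    · have hv1 : 0 < f (σ i) v := gpos v hv (ne_of_lt hvb)
      rcases eq_or_lt_of_le hu.1 with hau | hau
      · rw [← hau, ga1]
        exact glt1 v hv (by intro h; rw [h] at huv; exact absurd huv (not_lt.mpr hu.1))
      · have hsupp : Set.Icc (t i) v ⊆ {z | z ∈ Set.Icc (0:ℝ) 1 ∧ 0 < f (σ i) z} := by
          intro z hz
          have hzI : z ∈ Set.Icc (t i) (t i') := ⟨hz.1, hz.2.trans hv.2⟩
          refine ⟨hsub hzI, ?_⟩
          have hc := convB (σ i) (tmem i) (hsub hv) hz.1 hz.2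
          rw [ga1] at hc
          have := lt_min one_pos hv1
          linarith
        have h := sconvB (σ i) hsupp hau huv
        rw [ga1] at h
        have hm : min 1 (f (σ i) v) = f (σ i) v := min_eq_right (ub _ v (hsub hv))
        linarith
  have ginj := ganti.injOn
  have gbij : Set.BijOn (f (σ i)) (Set.Icc (t i) (t i')) (Set.Icc 0 1) := by
    refine ⟨fun x hx => hmap (σ i) (hsub hx), ginj, ?_⟩
    have hIV := intermediate_value_Icc' hab.le ((hcont (σ i)).mono hsub)
    rw [gb0, ga1] at hIV
    exact hIV
  have hbij : Set.BijOn (f (σ i')) (Set.Icc (t i) (t i')) (Set.Icc 0 1) := by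
    refine ⟨fun x hx => hmap (σ i') (hsub hx), ?_, ?_⟩
    · intro u hu v hv huv
      apply ginj hu hv
      have h1 := sum2 u hu
      have h2 := sum2 v hv
      linarith
    · have hIV := intermediate_value_Icc hab.le ((hcont (σ i')).mono hsub)
      rw [ha0, hb1] at hIV
      exact hIV
  exact ⟨⟨tval i, gb0⟩, others, fun x hx => by linarith [sum2 x hx], gbij, hbij⟩

private lemma fin_lt_succ {n : ℕ} (k : Fin n) (hk : (k : ℕ) + 1 < n) :
    k < (⟨(k : ℕ) + 1, hk⟩ : Fin n) := Fin.lt_def.mpr (Nat.lt_succ_self _)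

private lemma forward (n : ℕ) (hn : 2 ≤ n) (f : Fin n → ℝ → ℝ)
    (hcont : ∀ i, ContinuousOn (f i) (Set.Icc 0 1))
    (hmap : ∀ i, Set.MapsTo (f i) (Set.Icc 0 1) (Set.Icc 0 1))
    (σ : Equiv.Perm (Fin n)) (t : Fin n → ℝ)
    (tmono : StrictMono t) (t0 : t ⟨0, two_le_pos' hn⟩ = 0) (t1 : t ⟨n - 1, two_le_pred_lt' hn⟩ = 1)
    (H : ∀ i : Fin n, ∀ hi : (i : ℕ) + 1 < n,
        (f (σ i) (t i) = 1 ∧ f (σ i) (t ⟨(i : ℕ) + 1, hi⟩) = 0) ∧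
        (∀ j : Fin n, j ≠ i → j ≠ ⟨(i : ℕ) + 1, hi⟩ →
          ∀ x ∈ Set.Icc (t i) (t ⟨(i : ℕ) + 1, hi⟩), f (σ j) x = 0) ∧
        (∀ x ∈ Set.Icc (t i) (t ⟨(i : ℕ) + 1, hi⟩),
          f (σ ⟨(i : ℕ) + 1, hi⟩) x = 1 - f (σ i) x) ∧
        (Set.BijOn (f (σ i)) (Set.Icc (t i) (t ⟨(i : ℕ) + 1, hi⟩)) (Set.Icc 0 1) ∧
         Set.BijOn (f (σ ⟨(i : ℕ) + 1, hi⟩))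
           (Set.Icc (t i) (t ⟨(i : ℕ) + 1, hi⟩)) (Set.Icc 0 1))) :
    ((∀ x ∈ Set.Icc (0:ℝ) 1, ∑ i : Fin n, f i x = 1) ∧
     (∀ x ∈ Set.Icc (0:ℝ) 1, ∀ i₁ i₂ i₃ : Fin n,
       i₁ ≠ i₂ → i₁ ≠ i₃ → i₂ ≠ i₃ →
       min (f i₁ x) (min (f i₂ x) (f i₃ x)) = 0) ∧
     (∀ i : Fin n, ∃! x, x ∈ Set.Icc (0:ℝ) 1 ∧ f i x = 1) ∧
     (∀ i : Fin n, ∀ x ∈ Set.Icc (0:ℝ) 1, ∀ y ∈ Set.Icc (0:ℝ) 1,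
       ∀ l ∈ Set.Icc (0:ℝ) 1, min (f i x) (f i y) ≤ f i (l * x + (1 - l) * y)) ∧
     (∀ i : Fin n, ∀ x y : ℝ, x < y →
       Set.Icc x y ⊆ {z | z ∈ Set.Icc (0:ℝ) 1 ∧ 0 < f i z} →
       ∀ l : ℝ, 0 < l → l < 1 →
         min (f i x) (f i y) < f i (l * x + (1 - l) * y))) := by
  have nn : ∀ j, ∀ x ∈ Set.Icc (0:ℝ) 1, 0 ≤ f j x := fun j x hx => (hmap j hx).1
  have ub : ∀ j, ∀ x ∈ Set.Icc (0:ℝ) 1, f j x ≤ 1 := fun j x hx => (hmap j hx).2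
  have tmem : ∀ i : Fin n, t i ∈ Set.Icc (0:ℝ) 1 := by
    intro i
    constructor
    · rw [← t0]
      exact tmono.monotone (by rw [Fin.le_def]; simp)
    · rw [← t1]
      refine tmono.monotone ?_
      rw [Fin.le_def]
      have := i.isLt
      simp
      omega
  have hsub : ∀ (k : Fin n) (hk : (k:ℕ)+1 < n),
      Set.Icc (t k) (t ⟨(k:ℕ)+1, hk⟩) ⊆ Set.Icc (0:ℝ) 1 :=
    fun k hk => Set.Icc_subset_Icc (tmem k).1 (tmem _).2
  have peakval : ∀ m : Fin n, f (σ m) (t m) = 1 := by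
    intro m
    by_cases h : (m:ℕ)+1 < n
    · exact (H m h).1.1
    · have hm : (m:ℕ) = n - 1 := by have := m.isLt; omega
      have h2 : ((⟨n-2, by omega⟩ : Fin n) : ℕ) + 1 < n := by
        show n - 2 + 1 < n
        omega
      set k : Fin n := ⟨n-2, by omega⟩ with hkdef
      have hkv : (k:ℕ) = n-2 := rfl
      have hke : (⟨(k:ℕ)+1, h2⟩ : Fin n) = m := Fin.ext (show (k:ℕ)+1 = (m:ℕ) by omega)
      have hmem : t (⟨(k:ℕ)+1, h2⟩ : Fin n) ∈ Set.Icc (t k) (t ⟨(k:ℕ)+1, h2⟩) :=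
        Set.right_mem_Icc.mpr (tmono (fin_lt_succ k h2)).le
      have h3 := (H k h2).2.2.1 (t ⟨(k:ℕ)+1, h2⟩) hmem
      rw [(H k h2).1.2] at h3
      rw [← hke, h3]
      norm_num
  have peakuniq : ∀ (m : Fin n) (x : ℝ), x ∈ Set.Icc (0:ℝ) 1 → f (σ m) x = 1 → x = t m := by
    intro m x hx hfx
    obtain ⟨k, hk, h1, h2⟩ := forward_cover hn t tmono t0 t1 hx
    have habk : t k ≤ t ⟨(k:ℕ)+1, hk⟩ := (tmono (fin_lt_succ k hk)).le
    by_cases hmk : m = k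
    · subst hmk
      exact (H m hk).2.2.2.1.injOn ⟨h1, h2⟩ (Set.left_mem_Icc.mpr habk)
        (hfx.trans (H m hk).1.1.symm)
    by_cases hmk' : m = ⟨(k:ℕ)+1, hk⟩
    · subst hmk'
      have h3 := (H k hk).2.2.1 x ⟨h1, h2⟩
      rw [hfx] at h3
      have h4 : f (σ k) x = 0 := by linarith
      have h5 : f (σ k) (t (⟨(k:ℕ)+1, hk⟩ : Fin n)) = 0 := (H k hk).1.2
      exact (H k hk).2.2.2.1.injOn ⟨h1, h2⟩ (Set.right_mem_Icc.mpr habk) (h4.trans h5.symm)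
    · have h0 := (H k hk).2.1 m hmk hmk' x ⟨h1, h2⟩
      rw [hfx] at h0
      norm_num at h0
  have ganti : ∀ (k : Fin n) (hk : (k:ℕ)+1 < n),
      StrictAntiOn (f (σ k)) (Set.Icc (t k) (t ⟨(k:ℕ)+1, hk⟩)) := by
    intro k hk
    refine ContinuousOn.strictAntiOn_of_injOn_Icc (tmono (fin_lt_succ k hk)).le ?_
      ((hcont (σ k)).mono (hsub k hk)) (H k hk).2.2.2.1.injOn
    rw [(H k hk).1.1, (H k hk).1.2]
    norm_num
  have gmono : ∀ (k : Fin n) (hk : (k:ℕ)+1 < n),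
      StrictMonoOn (f (σ ⟨(k:ℕ)+1, hk⟩)) (Set.Icc (t k) (t ⟨(k:ℕ)+1, hk⟩)) := by
    intro k hk
    have habk : t k ≤ t ⟨(k:ℕ)+1, hk⟩ := (tmono (fin_lt_succ k hk)).le
    refine ContinuousOn.strictMonoOn_of_injOn_Icc habk ?_
      ((hcont _).mono (hsub k hk)) (H k hk).2.2.2.2.injOn
    have e1 := (H k hk).2.2.1 (t k) (Set.left_mem_Icc.mpr habk)
    have e2 := (H k hk).2.2.1 (t ⟨(k:ℕ)+1, hk⟩) (Set.right_mem_Icc.mpr habk)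
    rw [(H k hk).1.1] at e1
    rw [(H k hk).1.2] at e2
    rw [e1, e2]
    norm_num
  have Mdec : ∀ (m : Fin n), ∀ x y : ℝ, x ∈ Set.Icc (0:ℝ) 1 → y ∈ Set.Icc (0:ℝ) 1 →
      t m ≤ x → x ≤ y →
      f (σ m) y ≤ f (σ m) x ∧ (x < y → 0 < f (σ m) y → f (σ m) y < f (σ m) x) := by
    intro m x y hx hy htm hxy
    by_cases h0 : f (σ m) y = 0
    · refine ⟨by rw [h0]; exact nn (σ m) x hx, fun _ hpos => ?_⟩
      rw [h0] at hpos
      exact absurd hpos (lt_irrefl 0)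
    · obtain ⟨k, hk, h1, h2⟩ := forward_cover hn t tmono t0 t1 hy
      have hmk : m = k ∨ m = ⟨(k:ℕ)+1, hk⟩ := by
        by_contra hc
        push_neg at hc
        exact h0 ((H k hk).2.1 m hc.1 hc.2 y ⟨h1, h2⟩)
      rcases hmk with rfl | rfl
      · have hyI : y ∈ Set.Icc (t m) (t ⟨(m:ℕ)+1, hk⟩) := ⟨h1, h2⟩
        have hxI : x ∈ Set.Icc (t m) (t ⟨(m:ℕ)+1, hk⟩) := ⟨htm, hxy.trans h2⟩
        exact ⟨(ganti m hk).antitoneOn hxI hyI hxy, fun hlt _ => (ganti m hk) hxI hyI hlt⟩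
      · have hxy2 : x = y := le_antisymm hxy (h2.trans htm)
        refine ⟨by rw [hxy2], fun hlt _ => ?_⟩
        rw [hxy2] at hlt
        exact absurd hlt (lt_irrefl y)
  have Minc : ∀ (m : Fin n), ∀ x y : ℝ, x ∈ Set.Icc (0:ℝ) 1 → y ∈ Set.Icc (0:ℝ) 1 →
      y ≤ t m → x ≤ y →
      f (σ m) x ≤ f (σ m) y ∧ (x < y → 0 < f (σ m) x → f (σ m) x < f (σ m) y) := by
    intro m x y hx hy htm hxy
    by_cases h0 : f (σ m) x = 0
    · refine ⟨by rw [h0]; exact nn (σ m) y hy, fun _ hpos => ?_⟩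
      rw [h0] at hpos
      exact absurd hpos (lt_irrefl 0)
    · obtain ⟨k, hk, h1, h2⟩ := forward_cover hn t tmono t0 t1 hx
      have hmk : m = k ∨ m = ⟨(k:ℕ)+1, hk⟩ := by
        by_contra hc
        push_neg at hc
        exact h0 ((H k hk).2.1 m hc.1 hc.2 x ⟨h1, h2⟩)
      rcases hmk with rfl | rfl
      · have hx2 : x = y := le_antisymm hxy (htm.trans h1)
        refine ⟨by rw [hx2], fun hlt _ => ?_⟩
        rw [hx2] at hlt
        exact absurd hlt (lt_irrefl y)
      · have hxI : x ∈ Set.Icc (t k) (t ⟨(k:ℕ)+1, hk⟩) := ⟨h1, h2⟩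
        have hyI : y ∈ Set.Icc (t k) (t ⟨(k:ℕ)+1, hk⟩) := ⟨h1.trans hxy, htm⟩
        exact ⟨(gmono k hk).monotoneOn hxI hyI hxy, fun hlt _ => (gmono k hk) hxI hyI hlt⟩
  refine ⟨?_, ?_, ?_, ?_, ?_⟩
  · -- Ruspini
    intro x hx
    obtain ⟨k, hk, h1, h2⟩ := forward_cover hn t tmono t0 t1 hx
    have hre : ∑ j, f (σ j) x = ∑ j, f j x := Equiv.sum_comp σ (fun j => f j x)
    rw [← hre, Finset.sum_eq_add_of_mem k ⟨(k:ℕ)+1, hk⟩ (Finset.mem_univ _) (Finset.mem_univ _)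
      (Fin.ne_of_val_ne (Nat.ne_of_lt (Nat.lt_succ_self _)))
      (fun c _ hc => (H k hk).2.1 c hc.1 hc.2 x ⟨h1, h2⟩),
      (H k hk).2.2.1 x ⟨h1, h2⟩]
    ring
  · -- 2-overlapping
    intro x hx i₁ i₂ i₃ h12 h13 h23
    obtain ⟨k, hk, h1, h2⟩ := forward_cover hn t tmono t0 t1 hx
    have key : ∀ i : Fin n, σ.symm i ≠ k → σ.symm i ≠ ⟨(k:ℕ)+1, hk⟩ → f i x = 0 := by
      intro i hk1 hk2
      have h := (H k hk).2.1 (σ.symm i) hk1 hk2 x ⟨h1, h2⟩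
      rwa [Equiv.apply_symm_apply] at h
    have n1 := nn i₁ x hx
    have n2 := nn i₂ x hx
    have n3 := nn i₃ x hx
    have hz : f i₁ x = 0 ∨ f i₂ x = 0 ∨ f i₃ x = 0 := by
      by_contra hc
      push_neg at hc
      have e1 : σ.symm i₁ = k ∨ σ.symm i₁ = ⟨(k:ℕ)+1, hk⟩ := by
        by_contra h
        push_neg at h
        exact hc.1 (key i₁ h.1 h.2)
      have e2 : σ.symm i₂ = k ∨ σ.symm i₂ = ⟨(k:ℕ)+1, hk⟩ := by
        by_contra h
        push_neg at h
        exact hc.2.1 (key i₂ h.1 h.2)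
      have e3 : σ.symm i₃ = k ∨ σ.symm i₃ = ⟨(k:ℕ)+1, hk⟩ := by
        by_contra h
        push_neg at h
        exact hc.2.2 (key i₃ h.1 h.2)
      have inj12 : σ.symm i₁ ≠ σ.symm i₂ := fun h => h12 (σ.symm.injective h)
      have inj13 : σ.symm i₁ ≠ σ.symm i₃ := fun h => h13 (σ.symm.injective h)
      have inj23 : σ.symm i₂ ≠ σ.symm i₃ := fun h => h23 (σ.symm.injective h)
      rcases e1 with e1 | e1 <;> rcases e2 with e2 | e2 <;> rcases e3 with e3 | e3 <;>
        first
          | exact inj12 (e1.trans e2.symm)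
          | exact inj13 (e1.trans e3.symm)
          | exact inj23 (e2.trans e3.symm)
    rcases hz with h | h | h
    · rw [h]
      exact min_eq_left (le_min n2 n3)
    · rw [h, min_eq_left n3, min_eq_right n1]
    · rw [h, min_eq_right n2, min_eq_right n1]
  · -- strong normality
    intro ii
    set m := σ.symm ii with hm
    have hfi : ∀ z, f ii z = f (σ m) z := by
      intro z
      rw [hm, Equiv.apply_symm_apply]
    refine ⟨t m, ⟨tmem m, by rw [hfi]; exact peakval m⟩, ?_⟩
    rintro x ⟨hx, hfx⟩
    rw [hfi] at hfx
    exact peakuniq m x hx hfx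
  · -- min-convexity
    intro ii x hx y hy l hl
    set m := σ.symm ii with hm
    have hfi : ∀ z, f ii z = f (σ m) z := by
      intro z
      rw [hm, Equiv.apply_symm_apply]
    rcases le_total x y with hxy | hxy
    · have hzx : x ≤ l * x + (1 - l) * y := by nlinarith [hl.1, hl.2]
      have hzy : l * x + (1 - l) * y ≤ y := by nlinarith [hl.1, hl.2]
      have hzm : l * x + (1 - l) * y ∈ Set.Icc (0:ℝ) 1 := ⟨hx.1.trans hzx, hzy.trans hy.2⟩
      rcases le_total (l * x + (1 - l) * y) (t m) with hc | hc
      · have h := (Minc m x _ hx hzm hc hzx).1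
        simp only [hfi]
        exact le_trans (min_le_left _ _) h
      · have h := (Mdec m _ y hzm hy hc hzy).1
        simp only [hfi]
        exact le_trans (min_le_right _ _) h
    · have hzy : y ≤ l * x + (1 - l) * y := by nlinarith [hl.1, hl.2]
      have hzx : l * x + (1 - l) * y ≤ x := by nlinarith [hl.1, hl.2]
      have hzm : l * x + (1 - l) * y ∈ Set.Icc (0:ℝ) 1 := ⟨hy.1.trans hzy, hzx.trans hx.2⟩
      rcases le_total (l * x + (1 - l) * y) (t m) with hc | hc
      · have h := (Minc m y _ hy hzm hc hzy).1
        simp only [hfi]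
        exact le_trans (min_le_right _ _) h
      · have h := (Mdec m _ x hzm hx hc hzx).1
        simp only [hfi]
        exact le_trans (min_le_left _ _) h
  · -- strict min-convexity on support
    intro ii x y hxy hsupp l hl0 hl1
    set m := σ.symm ii with hm
    have hfi : ∀ z, f ii z = f (σ m) z := by
      intro z
      rw [hm, Equiv.apply_symm_apply]
    have hx := hsupp (Set.left_mem_Icc.mpr hxy.le)
    have hy := hsupp (Set.right_mem_Icc.mpr hxy.le)
    simp only [Set.mem_setOf_eq] at hx hy
    have hzx : x < l * x + (1 - l) * y := by
      nlinarith [mul_pos (sub_pos.mpr hl1) (sub_pos.mpr hxy)]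
    have hzy : l * x + (1 - l) * y < y := by
      nlinarith [mul_pos hl0 (sub_pos.mpr hxy)]
    have hz := hsupp ⟨hzx.le, hzy.le⟩
    simp only [Set.mem_setOf_eq] at hz
    rcases le_total (l * x + (1 - l) * y) (t m) with hc | hc
    · have h := (Minc m x _ hx.1 hz.1 hc hzx.le).2 hzx (by rw [← hfi x]; exact hx.2)
      simp only [hfi]
      exact lt_of_le_of_lt (min_le_left _ _) h
    · have h := (Mdec m _ y hz.1 hy.1 hc hzy.le).2 hzy (by rw [← hfi y]; exact hy.2)
      simp only [hfi]
      exact lt_of_le_of_lt (min_le_right _ _) h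

/-- Theorem I, (i) ⇔ (ii): `P = {f_1,…,f_n}` is a pseudo-triangular basis iff it
is a 2-overlapping Ruspini partition in which each `f i` is strongly normal,
min-convex, and strictly min-convex on its support. -/
theorem stmt11 (n : ℕ) (hn : 2 ≤ n) (f : Fin n → ℝ → ℝ)
    (hcont : ∀ i, ContinuousOn (f i) (Set.Icc 0 1))
    (hmap : ∀ i, Set.MapsTo (f i) (Set.Icc 0 1) (Set.Icc 0 1)) :
    (∃ σ : Equiv.Perm (Fin n), ∃ t : Fin n → ℝ,
      StrictMono t ∧ t ⟨0, by omega⟩ = 0 ∧ t ⟨n - 1, by omega⟩ = 1 ∧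
      ∀ i : Fin n, ∀ hi : (i : ℕ) + 1 < n,
        (f (σ i) (t i) = 1 ∧ f (σ i) (t ⟨(i : ℕ) + 1, hi⟩) = 0) ∧
        (∀ j : Fin n, j ≠ i → j ≠ ⟨(i : ℕ) + 1, hi⟩ →
          ∀ x ∈ Set.Icc (t i) (t ⟨(i : ℕ) + 1, hi⟩), f (σ j) x = 0) ∧
        (∀ x ∈ Set.Icc (t i) (t ⟨(i : ℕ) + 1, hi⟩),
          f (σ ⟨(i : ℕ) + 1, hi⟩) x = 1 - f (σ i) x) ∧
        (Set.BijOn (f (σ i)) (Set.Icc (t i) (t ⟨(i : ℕ) + 1, hi⟩)) (Set.Icc 0 1) ∧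
         Set.BijOn (f (σ ⟨(i : ℕ) + 1, hi⟩))
           (Set.Icc (t i) (t ⟨(i : ℕ) + 1, hi⟩)) (Set.Icc 0 1))) ↔
    ((∀ x ∈ Set.Icc (0:ℝ) 1, ∑ i : Fin n, f i x = 1) ∧
     (∀ x ∈ Set.Icc (0:ℝ) 1, ∀ i₁ i₂ i₃ : Fin n,
       i₁ ≠ i₂ → i₁ ≠ i₃ → i₂ ≠ i₃ →
       min (f i₁ x) (min (f i₂ x) (f i₃ x)) = 0) ∧
     (∀ i : Fin n, ∃! x, x ∈ Set.Icc (0:ℝ) 1 ∧ f i x = 1) ∧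
     (∀ i : Fin n, ∀ x ∈ Set.Icc (0:ℝ) 1, ∀ y ∈ Set.Icc (0:ℝ) 1,
       ∀ l ∈ Set.Icc (0:ℝ) 1, min (f i x) (f i y) ≤ f i (l * x + (1 - l) * y)) ∧
     (∀ i : Fin n, ∀ x y : ℝ, x < y →
       Set.Icc x y ⊆ {z | z ∈ Set.Icc (0:ℝ) 1 ∧ 0 < f i z} →
       ∀ l : ℝ, 0 < l → l < 1 →
         min (f i x) (f i y) < f i (l * x + (1 - l) * y))) := by
  constructor
  · rintro ⟨σ, t, tmono, t0, t1, H⟩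
    exact forward n hn f hcont hmap σ t tmono t0 t1 H
  · rintro ⟨hsum, _hov, hnorm, hconv, hsconv⟩
    exact backward n hn f hcont hmap hsum hnorm hconv hsconv
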